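/- The function d(A,B) = ∫₀^∞ e^{-R} d_R(A,B) dR on C(M) × C(M) is a metric: it is nonnegative, symmetric, satisfies the triangle inequality, and d(A,B) = 0 holds if and only if A = B. -/

import Mathlib

open Metric Filter Set Topology

/-- The space of closed subsets of `M`. -/
abbrev ClosedSubsets (M : Type*) [MetricSpace M] := {A : Set M // IsClosed A}

/-- The truncated Hausdorff pseudo-distance `d_R(A,B) = min {1, d_Haus(A_R, B_R)}`,
where `A_R = A ∩ closedBall p R`, with the convention that the Hausdorff distance between
the empty set and a nonempty set is `+∞` (so the truncation gives `1`), and between two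
empty sets is `0`. -/
noncomputable def dR {M : Type*} [MetricSpace M] (p : M) (R : ℝ) (A B : Set M) : ℝ :=
  (min 1 (EMetric.hausdorffEdist (A ∩ closedBall p R) (B ∩ closedBall p R))).toReal

/-- `d(A,B) = ∫₀^∞ e^{-R} d_R(A,B) dR`. -/
noncomputable def dChab {M : Type*} [MetricSpace M] (p : M) (A B : Set M) : ℝ :=
  ∫ R in Ioi (0 : ℝ), Real.exp (-R) * dR p R A B

open MeasureTheory ENNReal

section Aux

variable {M : Type*} [MetricSpace M]

lemma dR_nonneg (p : M) (R : ℝ) (A B : Set M) : 0 ≤ dR p R A B :=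
  ENNReal.toReal_nonneg

lemma dR_le_one (p : M) (R : ℝ) (A B : Set M) : dR p R A B ≤ 1 := by
  unfold dR
  have h : min 1 (EMetric.hausdorffEdist (A ∩ closedBall p R) (B ∩ closedBall p R)) ≤ 1 :=
    min_le_left _ _
  calc (min 1 (EMetric.hausdorffEdist (A ∩ closedBall p R) (B ∩ closedBall p R))).toReal
      ≤ (1 : ℝ≥0∞).toReal := ENNReal.toReal_mono one_ne_top h
    _ = 1 := by simp

lemma dR_symm (p : M) (R : ℝ) (A B : Set M) : dR p R A B = dR p R B A := by
  unfold dR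
  unfold EMetric.hausdorffEdist
  rw [Metric.hausdorffEDist_comm]

lemma dR_self (p : M) (R : ℝ) (A : Set M) : dR p R A A = 0 := by
  unfold dR
  simp [EMetric.hausdorffEdist, Metric.hausdorffEDist_self]

lemma min1_ne_top (x : ℝ≥0∞) : min 1 x ≠ ⊤ :=
  ne_top_of_le_ne_top one_ne_top (min_le_left _ _)

lemma min1_add_le {x y e : ℝ≥0∞} (h : x ≤ y + e) : min 1 x ≤ min 1 y + e := by
  rcases le_total (1 : ℝ≥0∞) y with hy | hy
  · calc min 1 x ≤ 1 := min_le_left _ _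
      _ = min 1 y := (min_eq_left hy).symm
      _ ≤ min 1 y + e := le_self_add
  · calc min 1 x ≤ x := min_le_right _ _
      _ ≤ y + e := h
      _ = min 1 y + e := by rw [min_eq_right hy]

lemma dR_triangle (p : M) (R : ℝ) (A B C : Set M) :
    dR p R A C ≤ dR p R A B + dR p R B C := by
  unfold dR
  set a := EMetric.hausdorffEdist (A ∩ closedBall p R) (C ∩ closedBall p R) with ha
  set b := EMetric.hausdorffEdist (A ∩ closedBall p R) (B ∩ closedBall p R) with hb
  set c := EMetric.hausdorffEdist (B ∩ closedBall p R) (C ∩ closedBall p R) with hc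
  have habc : a ≤ b + c := EMetric.hausdorffEdist_triangle
  have key : min 1 a ≤ min 1 b + min 1 c := by
    rcases le_total (1 : ℝ≥0∞) c with hcy | hcy
    · calc min 1 a ≤ 1 := min_le_left _ _
        _ = min 1 c := (min_eq_left hcy).symm
        _ ≤ min 1 b + min 1 c := le_add_self
    · exact min1_add_le (by rw [min_eq_right hcy] at *; exact habc)
  calc (min 1 a).toReal ≤ (min 1 b + min 1 c).toReal :=
        ENNReal.toReal_mono (by simp [ENNReal.add_ne_top, min1_ne_top]) key
    _ = (min 1 b).toReal + (min 1 c).toReal :=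
        ENNReal.toReal_add (min1_ne_top _) (min1_ne_top _)

variable [ProperSpace M]

/-- On a proper space, the truncation `A ∩ closedBall p R` is right-continuous in `R`. -/
lemma trunc_approx (p : M) {A : Set M} (hA : IsClosed A) (R : ℝ) {ε : ℝ≥0∞} (hε : 0 < ε) :
    ∃ δ > (0:ℝ), ∀ R', R ≤ R' → R' ≤ R + δ →
      EMetric.hausdorffEdist (A ∩ closedBall p R') (A ∩ closedBall p R) ≤ ε := by
  by_contra h
  push_neg at h
  -- extract a bad sequence
  have hseq : ∀ n : ℕ, ∃ x : M, x ∈ A ∧ dist x p ≤ R + 1 / (n + 1) ∧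
      ε < EMetric.infEdist x (A ∩ closedBall p R) := by
    intro n
    obtain ⟨R', hR1, hR2, hbad⟩ := h (1 / (n + 1)) (by positivity)
    by_contra hx
    push_neg at hx
    apply hbad.not_ge
    apply EMetric.hausdorffEdist_le_of_infEdist
    · rintro x ⟨hxA, hxB⟩
      rw [mem_closedBall] at hxB
      exact hx x hxA (le_trans hxB hR2)
    · intro x hx2
      have : x ∈ A ∩ closedBall p R' := ⟨hx2.1, by
        rw [mem_closedBall] at *; exact hx2.2.trans hR1⟩
      calc EMetric.infEdist x (A ∩ closedBall p R') = 0 := EMetric.infEdist_zero_of_mem this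
        _ ≤ ε := zero_le
  choose x hxA hxd hxe using hseq
  have hxball : ∀ n, x n ∈ closedBall p (R + 1) := by
    intro n
    rw [mem_closedBall]
    refine (hxd n).trans (by
      have : (1:ℝ) / (n + 1) ≤ 1 := by
        rw [div_le_one (by positivity)]; linarith [Nat.cast_nonneg (α := ℝ) n]
      linarith)
  obtain ⟨y, hy, φ, hφ, hlim⟩ :=
    (isCompact_closedBall p (R + 1)).tendsto_subseq hxball
  have hyA : y ∈ A := hA.mem_of_tendsto hlim (Eventually.of_forall fun n => hxA _)
  have hyR : dist y p ≤ R := by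
    have h1 : Tendsto (fun n => dist (x (φ n)) p) atTop (𝓝 (dist y p)) :=
      (Continuous.dist continuous_id continuous_const).continuousAt.tendsto.comp hlim
    have h2 : Tendsto (fun n : ℕ => R + 1 / ((φ n : ℝ) + 1)) atTop (𝓝 (R + 0)) := by
      apply Tendsto.const_add
      apply Tendsto.comp tendsto_one_div_add_atTop_nhds_zero_nat
      exact hφ.tendsto_atTop
    rw [add_zero] at h2
    exact le_of_tendsto_of_tendsto' h1 h2 fun n => hxd (φ n)
  have hy0 : EMetric.infEdist y (A ∩ closedBall p R) = 0 :=
    EMetric.infEdist_zero_of_mem ⟨hyA, mem_closedBall.2 hyR⟩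
  have hcont : Tendsto (fun n => EMetric.infEdist (x (φ n)) (A ∩ closedBall p R))
      atTop (𝓝 0) := by
    rw [← hy0]
    exact (EMetric.continuous_infEdist.tendsto y).comp hlim
  have : ∀ᶠ n in atTop, EMetric.infEdist (x (φ n)) (A ∩ closedBall p R) < ε :=
    hcont.eventually_lt_const hε
  obtain ⟨n, hn⟩ := this.exists
  exact lt_asymm hn (hxe (φ n))

/-- `dR` is right-continuous in `R`. -/
lemma dR_rightCont (p : M) {A B : Set M} (hA : IsClosed A) (hB : IsClosed B) (R : ℝ) :
    ContinuousWithinAt (fun R' => dR p R' A B) (Ici R) R := by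
  rw [Metric.continuousWithinAt_iff]
  intro ε hε
  set e : ℝ≥0∞ := ENNReal.ofReal (ε / 3) with he
  have he0 : 0 < e := ENNReal.ofReal_pos.2 (by linarith)
  obtain ⟨δA, hδA, hAapprox⟩ := trunc_approx p hA R he0
  obtain ⟨δB, hδB, hBapprox⟩ := trunc_approx p hB R he0
  refine ⟨min δA δB, lt_min hδA hδB, fun R' hR' hdist => ?_⟩
  rw [mem_Ici] at hR'
  rw [Real.dist_eq, abs_of_nonneg (by linarith)] at hdist
  have hRA : EMetric.hausdorffEdist (A ∩ closedBall p R') (A ∩ closedBall p R) ≤ e :=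
    hAapprox R' hR' (by have := min_le_left δA δB; linarith)
  have hRB : EMetric.hausdorffEdist (B ∩ closedBall p R') (B ∩ closedBall p R) ≤ e :=
    hBapprox R' hR' (by have := min_le_right δA δB; linarith)
  set H' := EMetric.hausdorffEdist (A ∩ closedBall p R') (B ∩ closedBall p R')
  set H := EMetric.hausdorffEdist (A ∩ closedBall p R) (B ∩ closedBall p R)
  have key1 : H' ≤ H + (e + e) := by
    calc H' ≤ EMetric.hausdorffEdist (A ∩ closedBall p R') (A ∩ closedBall p R) + H +
        EMetric.hausdorffEdist (B ∩ closedBall p R) (B ∩ closedBall p R') := by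
          refine le_trans (EMetric.hausdorffEdist_triangle (t := A ∩ closedBall p R)) ?_
          refine add_le_add_right ?_ _ |>.trans (add_assoc _ _ _).symm.le
          exact EMetric.hausdorffEdist_triangle (t := B ∩ closedBall p R)
      _ ≤ e + H + e := by
          gcongr
          rwa [EMetric.hausdorffEdist, Metric.hausdorffEDist_comm]
      _ = H + (e + e) := by ring
  have key2 : H ≤ H' + (e + e) := by
    calc H ≤ EMetric.hausdorffEdist (A ∩ closedBall p R) (A ∩ closedBall p R') + H' +
        EMetric.hausdorffEdist (B ∩ closedBall p R') (B ∩ closedBall p R) := by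
          refine le_trans (EMetric.hausdorffEdist_triangle (t := A ∩ closedBall p R')) ?_
          refine add_le_add_right ?_ _ |>.trans (add_assoc _ _ _).symm.le
          exact EMetric.hausdorffEdist_triangle (t := B ∩ closedBall p R')
      _ ≤ e + H' + e := by
          gcongr
          rwa [EMetric.hausdorffEdist, Metric.hausdorffEDist_comm]
      _ = H' + (e + e) := by ring
  have hee : e + e = ENNReal.ofReal (2 * (ε / 3)) := by
    rw [he, ← ENNReal.ofReal_add (by linarith) (by linarith)]; ring_nf
  have hmin1 : min 1 H' ≤ min 1 H + (e + e) := min1_add_le key1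
  have hmin2 : min 1 H ≤ min 1 H' + (e + e) := min1_add_le key2
  have hfin : ∀ x : ℝ≥0∞, (min 1 x).toReal ≤ 1 := by
    intro x
    calc (min 1 x).toReal ≤ (1:ℝ≥0∞).toReal := ENNReal.toReal_mono one_ne_top (min_le_left _ _)
      _ = 1 := by simp
  have h1 : (min 1 H').toReal ≤ (min 1 H).toReal + 2 * (ε / 3) := by
    calc (min 1 H').toReal ≤ (min 1 H + (e + e)).toReal :=
          ENNReal.toReal_mono (by rw [hee]; exact ENNReal.add_ne_top.2 ⟨min1_ne_top _, ofReal_ne_top⟩) hmin1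
      _ = (min 1 H).toReal + 2 * (ε / 3) := by
          rw [hee, ENNReal.toReal_add (min1_ne_top _) ofReal_ne_top,
            ENNReal.toReal_ofReal (by linarith)]
  have h2 : (min 1 H).toReal ≤ (min 1 H').toReal + 2 * (ε / 3) := by
    calc (min 1 H).toReal ≤ (min 1 H' + (e + e)).toReal :=
          ENNReal.toReal_mono (by rw [hee]; exact ENNReal.add_ne_top.2 ⟨min1_ne_top _, ofReal_ne_top⟩) hmin2
      _ = (min 1 H').toReal + 2 * (ε / 3) := by
          rw [hee, ENNReal.toReal_add (min1_ne_top _) ofReal_ne_top,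
            ENNReal.toReal_ofReal (by linarith)]
  show dist (dR p R' A B) (dR p R A B) < ε
  have hdr' : dR p R' A B = (min 1 H').toReal := rfl
  have hdr : dR p R A B = (min 1 H).toReal := rfl
  rw [Real.dist_eq, abs_sub_lt_iff, hdr, hdr']
  constructor <;> linarith

/-- A right-continuous function `ℝ → ℝ` is measurable. -/
lemma measurable_of_rightCont {f : ℝ → ℝ} (hf : ∀ x, ContinuousWithinAt f (Ici x) x) :
    Measurable f := by
  have key : ∀ n : ℕ, Measurable (fun x : ℝ => f ((⌈x * 2 ^ n⌉ : ℝ) / 2 ^ n)) := by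
    intro n
    have h1 : Measurable (fun x : ℝ => (⌈x * 2 ^ n⌉ : ℤ)) :=
      (measurable_id.mul_const _).ceil
    exact (measurable_from_top (f := fun k : ℤ => f ((k : ℝ) / 2 ^ n))).comp h1
  apply measurable_of_tendsto_metrizable key
  rw [tendsto_pi_nhds]
  intro x
  have hge : ∀ n : ℕ, x ≤ (⌈x * 2 ^ n⌉ : ℝ) / 2 ^ n := by
    intro n
    rw [le_div_iff₀ (by positivity)]
    exact Int.le_ceil _
  have hle : ∀ n : ℕ, (⌈x * 2 ^ n⌉ : ℝ) / 2 ^ n ≤ x + (1 / 2) ^ n := by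
    intro n
    rw [div_le_iff₀ (by positivity)]
    have := (Int.ceil_lt_add_one (x * 2 ^ n)).le
    calc (⌈x * 2 ^ n⌉ : ℝ) ≤ x * 2 ^ n + 1 := this
      _ = (x + (1/2) ^ n) * 2 ^ n := by
          rw [add_mul, ← mul_pow]; norm_num
  have htend : Tendsto (fun n : ℕ => (⌈x * 2 ^ n⌉ : ℝ) / 2 ^ n) atTop (𝓝 x) := by
    have h2 : Tendsto (fun n : ℕ => x + (1/2 : ℝ) ^ n) atTop (𝓝 (x + 0)) :=
      tendsto_const_nhds.add (tendsto_pow_atTop_nhds_zero_of_lt_one (by norm_num) (by norm_num))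
    rw [add_zero] at h2
    exact tendsto_of_tendsto_of_tendsto_of_le_of_le tendsto_const_nhds h2 hge hle
  have htend' : Tendsto (fun n : ℕ => (⌈x * 2 ^ n⌉ : ℝ) / 2 ^ n) atTop (𝓝[Ici x] x) := by
    rw [tendsto_nhdsWithin_iff]
    exact ⟨htend, Eventually.of_forall fun n => hge n⟩
  exact (hf x).tendsto.comp htend'

lemma measurable_dR (p : M) {A B : Set M} (hA : IsClosed A) (hB : IsClosed B) :
    Measurable (fun R => dR p R A B) :=
  measurable_of_rightCont (fun R => dR_rightCont p hA hB R)

lemma integrable_exp_dR (p : M) {A B : Set M} (hA : IsClosed A) (hB : IsClosed B) :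
    IntegrableOn (fun R => Real.exp (-R) * dR p R A B) (Ioi 0) := by
  have hmeas : Measurable (fun R => Real.exp (-R) * dR p R A B) :=
    (Real.measurable_exp.comp measurable_neg).mul (measurable_dR p hA hB)
  have hint : IntegrableOn (fun R : ℝ => Real.exp (-1 * R)) (Ioi 0) :=
    exp_neg_integrableOn_Ioi 0 one_pos
  refine Integrable.mono hint hmeas.aestronglyMeasurable ?_
  filter_upwards with R
  rw [Real.norm_eq_abs, Real.norm_eq_abs, abs_mul, abs_of_pos (Real.exp_pos _),
    abs_of_pos (Real.exp_pos _), neg_one_mul]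
  calc Real.exp (-R) * |dR p R A B| ≤ Real.exp (-R) * 1 := by
        refine mul_le_mul_of_nonneg_left ?_ (Real.exp_pos _).le
        rw [abs_of_nonneg (dR_nonneg p R A B)]
        exact dR_le_one p R A B
    _ = Real.exp (-R) := mul_one _

end Aux

/-- The Chabauty topology on the space of closed subsets of `M`, generated by the sets
`{C | C ∩ K = ∅}` for `K` compact and `{C | C ∩ U ≠ ∅}` for `U` open. -/
def Chabauty (M : Type*) [MetricSpace M] : TopologicalSpace (ClosedSubsets M) :=
  TopologicalSpace.generateFrom
    ({S | ∃ K : Set M, IsCompact K ∧ S = {C : ClosedSubsets M | C.1 ∩ K = ∅}} ∪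
     {S | ∃ U : Set M, IsOpen U ∧ S = {C : ClosedSubsets M | (C.1 ∩ U).Nonempty}})

/-- `d(A,B) = ∫₀^∞ e^{-R} d_R(A,B) dR` is a metric on the space of closed subsets of a
proper metric space: nonnegative, symmetric, satisfies the triangle inequality, and
vanishes exactly on the diagonal. -/
theorem dChab_is_metric (M : Type*) [MetricSpace M] [ProperSpace M] (p : M) :
    (∀ A B : ClosedSubsets M, 0 ≤ dChab p A.1 B.1) ∧
    (∀ A B : ClosedSubsets M, dChab p A.1 B.1 = dChab p B.1 A.1) ∧
    (∀ A B C : ClosedSubsets M, dChab p A.1 C.1 ≤ dChab p A.1 B.1 + dChab p B.1 C.1) ∧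
    (∀ A B : ClosedSubsets M, dChab p A.1 B.1 = 0 ↔ A = B) := by
  classical
  have hnonneg : ∀ A B : ClosedSubsets M, 0 ≤ dChab p A.1 B.1 := by
    intro A B
    apply setIntegral_nonneg measurableSet_Ioi
    intro R _
    exact mul_nonneg (Real.exp_pos _).le (dR_nonneg p R A.1 B.1)
  have hsymm : ∀ A B : ClosedSubsets M, dChab p A.1 B.1 = dChab p B.1 A.1 := by
    intro A B
    unfold dChab
    congr 1
    funext R
    rw [dR_symm]
  refine ⟨hnonneg, hsymm, ?_, ?_⟩
  · intro A B C
    unfold dChab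
    have hAB := integrable_exp_dR p A.2 B.2
    have hBC := integrable_exp_dR p B.2 C.2
    have hAC := integrable_exp_dR p A.2 C.2
    calc ∫ R in Ioi (0:ℝ), Real.exp (-R) * dR p R A.1 C.1
        ≤ ∫ R in Ioi (0:ℝ), (Real.exp (-R) * dR p R A.1 B.1 +
            Real.exp (-R) * dR p R B.1 C.1) := by
          apply integral_mono hAC (hAB.add hBC)
          intro R
          have := dR_triangle p R A.1 B.1 C.1
          simp only [Pi.add_apply]
          nlinarith [Real.exp_pos (-R)]
      _ = _ := integral_add hAB hBC
  · intro A B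
    constructor
    · intro hzero
      -- the integrand vanishes a.e.
      have hint := integrable_exp_dR p A.2 B.2
      have hae : (fun R => Real.exp (-R) * dR p R A.1 B.1)
          =ᵐ[volume.restrict (Ioi (0:ℝ))] 0 := by
        rw [← integral_eq_zero_iff_of_nonneg
          (fun R => mul_nonneg (Real.exp_pos _).le (dR_nonneg p R A.1 B.1)) hint]
        exact hzero
      rw [EventuallyEq, ae_restrict_iff' measurableSet_Ioi] at hae
      -- the exceptional set is null
      set E : Set ℝ := {R | ¬ (R ∈ Ioi (0:ℝ) → Real.exp (-R) * dR p R A.1 B.1 = (0:ℝ→ℝ) R)}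
        with hE
      have hEnull : volume E = 0 := hae
      -- dR vanishes for every R ≥ 0, by right-continuity and density
      have hdR0 : ∀ R : ℝ, 0 ≤ R → dR p R A.1 B.1 = 0 := by
        intro R hR
        by_contra hne
        have hpos : 0 < dR p R A.1 B.1 :=
          lt_of_le_of_ne (dR_nonneg p R A.1 B.1) (Ne.symm hne)
        obtain ⟨δ, hδ, hcont⟩ := Metric.continuousWithinAt_iff.1
          (dR_rightCont p A.2 B.2 R) (dR p R A.1 B.1) hpos
        -- find a point of (R, R+δ) not in E
        have hsub : ¬ (Ioo R (R + δ) ⊆ E) := by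
          intro hsub
          have h1 : volume (Ioo R (R + δ)) = 0 := measure_mono_null hsub hEnull
          rw [Real.volume_Ioo] at h1
          simp only [ENNReal.ofReal_eq_zero] at h1
          linarith
        obtain ⟨r, hrmem, hrE⟩ := not_subset.1 hsub
        have hr0 : r ∈ Ioi (0:ℝ) := lt_of_le_of_lt hR hrmem.1
        rw [hE, mem_setOf_eq, not_not] at hrE
        have hr1 : Real.exp (-r) * dR p r A.1 B.1 = 0 := hrE hr0
        have hr2 : dR p r A.1 B.1 = 0 := by
          rcases mul_eq_zero.1 hr1 with h | h
          · exact absurd h (Real.exp_pos _).ne'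
          · exact h
        have hr3 : dist r R < δ := by
          rw [Real.dist_eq, abs_of_pos (by linarith [hrmem.1] : (0:ℝ) < r - R)]
          linarith [hrmem.2]
        have := hcont (show r ∈ Ici R from hrmem.1.le) hr3
        rw [hr2] at this
        rw [Real.dist_eq, abs_of_neg (by linarith : (0:ℝ) - dR p R A.1 B.1 < 0)] at this
        simp only [zero_sub, neg_neg] at this
        exact lt_irrefl _ this
      -- deduce A = B
      apply Subtype.ext
      ext x
      constructor
      · intro hx
        have hR : (0:ℝ) ≤ dist x p + 1 := by positivity
        have h0 := hdR0 (dist x p + 1) hR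
        unfold dR at h0
        have hmin : min 1 (EMetric.hausdorffEdist
            (A.1 ∩ closedBall p (dist x p + 1)) (B.1 ∩ closedBall p (dist x p + 1))) = 0 := by
          have := ENNReal.toReal_eq_zero_iff _ |>.1 h0
          rcases this with h | h
          · exact h
          · exact absurd h (min1_ne_top _)
        have hH : EMetric.hausdorffEdist
            (A.1 ∩ closedBall p (dist x p + 1)) (B.1 ∩ closedBall p (dist x p + 1)) = 0 := by
          rcases le_total (1:ℝ≥0∞)
              (EMetric.hausdorffEdist (A.1 ∩ closedBall p (dist x p + 1))
                (B.1 ∩ closedBall p (dist x p + 1))) with h | h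
          · rw [min_eq_left h] at hmin; exact absurd hmin one_ne_zero
          · rwa [min_eq_right h] at hmin
        have heq := (EMetric.hausdorffEdist_zero_iff_eq_of_closed
          (A.2.inter Metric.isClosed_closedBall) (B.2.inter Metric.isClosed_closedBall)).1 hH
        have hxmem : x ∈ A.1 ∩ closedBall p (dist x p + 1) :=
          ⟨hx, mem_closedBall.2 (by linarith)⟩
        rw [heq] at hxmem
        exact hxmem.1
      · intro hx
        have hR : (0:ℝ) ≤ dist x p + 1 := by positivity
        have h0 := hdR0 (dist x p + 1) hR
        unfold dR at h0
        have hmin : min 1 (EMetric.hausdorffEdist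
            (A.1 ∩ closedBall p (dist x p + 1)) (B.1 ∩ closedBall p (dist x p + 1))) = 0 := by
          have := ENNReal.toReal_eq_zero_iff _ |>.1 h0
          rcases this with h | h
          · exact h
          · exact absurd h (min1_ne_top _)
        have hH : EMetric.hausdorffEdist
            (A.1 ∩ closedBall p (dist x p + 1)) (B.1 ∩ closedBall p (dist x p + 1)) = 0 := by
          rcases le_total (1:ℝ≥0∞)
              (EMetric.hausdorffEdist (A.1 ∩ closedBall p (dist x p + 1))
                (B.1 ∩ closedBall p (dist x p + 1))) with h | h
          · rw [min_eq_left h] at hmin; exact absurd hmin one_ne_zero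
          · rwa [min_eq_right h] at hmin
        have heq := (EMetric.hausdorffEdist_zero_iff_eq_of_closed
          (A.2.inter Metric.isClosed_closedBall) (B.2.inter Metric.isClosed_closedBall)).1 hH
        have hxmem : x ∈ B.1 ∩ closedBall p (dist x p + 1) :=
          ⟨hx, mem_closedBall.2 (by linarith)⟩
        rw [← heq] at hxmem
        exact hxmem.1
    · intro h
      subst h
      unfold dChab
      simp [dR_self]
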